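/- If A − B − E forms a Markov chain, then I(A;B|U) − I(A;E|U) ≥ 0 for every U with U − A − (B,E) a Markov chain; in particular the maximal achievable equivocation difference equals I(A;B) − I(A;E) ≥ 0. -/

import Mathlib

open Finset

/-- `w` is a probability mass function on the finite sample space `Ω`. -/
def IsPMF {Ω : Type} [Fintype Ω] (w : Ω → ℝ) : Prop :=
  (∀ ω, 0 ≤ w ω) ∧ ∑ ω, w ω = 1

open scoped Classical in
/-- Probability that the random variable `X` takes the value `x`. -/
noncomputable def pr {Ω : Type} [Fintype Ω] (w : Ω → ℝ) {α : Type} (X : Ω → α) (x : α) : ℝ :=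
  ∑ ω, if X ω = x then w ω else 0

/-- Shannon entropy (in bits) of the random variable `X`. -/
noncomputable def H {Ω : Type} [Fintype Ω] (w : Ω → ℝ) {α : Type} [Fintype α] (X : Ω → α) : ℝ :=
  -∑ x, pr w X x * Real.logb 2 (pr w X x)

/-- Conditional entropy `H(X|Y)`. -/
noncomputable def condH {Ω : Type} [Fintype Ω] (w : Ω → ℝ) {α β : Type} [Fintype α] [Fintype β]
    (X : Ω → α) (Y : Ω → β) : ℝ :=
  H w (fun ω => (X ω, Y ω)) - H w Y

/-- Mutual information `I(X;Y)`. -/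
noncomputable def MI {Ω : Type} [Fintype Ω] (w : Ω → ℝ) {α β : Type} [Fintype α] [Fintype β]
    (X : Ω → α) (Y : Ω → β) : ℝ :=
  H w X + H w Y - H w (fun ω => (X ω, Y ω))

/-- Conditional mutual information `I(X;Y|Z)`. -/
noncomputable def cMI {Ω : Type} [Fintype Ω] (w : Ω → ℝ) {α β γ : Type}
    [Fintype α] [Fintype β] [Fintype γ] (X : Ω → α) (Y : Ω → β) (Z : Ω → γ) : ℝ :=
  condH w X Z - condH w X (fun ω => (Y ω, Z ω))

/-- `X` and `Y` are conditionally independent given `Z`, i.e. the Markov chain `X − Z − Y`. -/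
def CondIndep {Ω : Type} [Fintype Ω] (w : Ω → ℝ) {α β γ : Type}
    (X : Ω → α) (Y : Ω → β) (Z : Ω → γ) : Prop :=
  ∀ x y z, pr w (fun ω => (X ω, Y ω, Z ω)) (x, y, z) * pr w Z z =
    pr w (fun ω => (X ω, Z ω)) (x, z) * pr w (fun ω => (Y ω, Z ω)) (y, z)

section Helpers
set_option linter.unusedSectionVars false
variable {Ω : Type} [Fintype Ω] {w : Ω → ℝ}

lemma pr_nonneg (hw : ∀ ω, 0 ≤ w ω) {α : Type} (X : Ω → α) (x : α) : 0 ≤ pr w X x :=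
  Finset.sum_nonneg fun ω _ => by split <;> simp [hw ω]

lemma pr_congr {α β : Type} {X : Ω → α} {Y : Ω → β} {x : α} {y : β}
    (h : ∀ ω, X ω = x ↔ Y ω = y) : pr w X x = pr w Y y := by
  classical
  exact Finset.sum_congr rfl fun ω _ => if_congr (h ω) rfl rfl

lemma pr_total {α : Type} [Fintype α] (X : Ω → α) : ∑ x, pr w X x = ∑ ω, w ω := by
  classical
  unfold pr
  rw [Finset.sum_comm]
  exact Finset.sum_congr rfl fun ω _ => by simp

variable {α β γ δ : Type} [Fintype α] [Fintype β] [Fintype γ] [Fintype δ]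

lemma marg1 (X : Ω → α) (Y : Ω → β) (Z : Ω → γ) (x z) :
    pr w (fun ω => (X ω, Z ω)) (x, z) = ∑ y, pr w (fun ω => (X ω, Y ω, Z ω)) (x, y, z) := by
  classical
  unfold pr; rw [Finset.sum_comm]
  refine Finset.sum_congr rfl fun ω _ => ?_
  by_cases hX : X ω = x <;> by_cases hZ : Z ω = z <;> simp [hX, hZ, Prod.ext_iff]

lemma marg2 (X : Ω → α) (Z : Ω → γ) (z) :
    pr w Z z = ∑ x, pr w (fun ω => (X ω, Z ω)) (x, z) := by
  classical
  unfold pr; rw [Finset.sum_comm]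
  refine Finset.sum_congr rfl fun ω _ => ?_
  by_cases hZ : Z ω = z <;> simp [hZ, Prod.ext_iff]

lemma marg3 (X : Ω → α) (Y : Ω → β) (x) :
    pr w X x = ∑ y, pr w (fun ω => (X ω, Y ω)) (x, y) := by
  classical
  unfold pr; rw [Finset.sum_comm]
  refine Finset.sum_congr rfl fun ω _ => ?_
  by_cases hX : X ω = x <;> simp [hX, Prod.ext_iff]

lemma marg4 (X : Ω → α) (Y : Ω → β) (V : Ω → δ) (Z : Ω → γ) (x y z) :
    pr w (fun ω => (X ω, Y ω, Z ω)) (x, y, z)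
      = ∑ v, pr w (fun ω => (X ω, Y ω, V ω, Z ω)) (x, y, v, z) := by
  classical
  unfold pr; rw [Finset.sum_comm]
  refine Finset.sum_congr rfl fun ω _ => ?_
  by_cases hX : X ω = x <;> by_cases hY : Y ω = y <;> by_cases hZ : Z ω = z <;>
    simp [hX, hY, hZ, Prod.ext_iff]

lemma marg5 (X : Ω → α) (Y : Ω → β) (Z : Ω → γ) (V : Ω → δ) (x y z) :
    pr w (fun ω => (X ω, Y ω, Z ω)) (x, y, z)
      = ∑ v, pr w (fun ω => (X ω, Y ω, Z ω, V ω)) (x, y, z, v) := by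
  classical
  unfold pr; rw [Finset.sum_comm]
  refine Finset.sum_congr rfl fun ω _ => ?_
  by_cases hX : X ω = x <;> by_cases hY : Y ω = y <;> by_cases hZ : Z ω = z <;>
    simp [hX, hY, hZ, Prod.ext_iff]

lemma marg6 (X : Ω → α) (Y : Ω → β) (Z : Ω → γ) (x y) :
    pr w (fun ω => (X ω, Y ω)) (x, y) = ∑ z, pr w (fun ω => (X ω, Y ω, Z ω)) (x, y, z) := by
  classical
  unfold pr; rw [Finset.sum_comm]
  refine Finset.sum_congr rfl fun ω _ => ?_
  by_cases hX : X ω = x <;> by_cases hY : Y ω = y <;> simp [hX, hY, Prod.ext_iff]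

lemma sum_comm3 {f : α → β → γ → ℝ} :
    ∑ x, ∑ y, ∑ z, f x y z = ∑ z, ∑ x, ∑ y, f x y z := by
  rw [show (∑ x, ∑ y, ∑ z, f x y z) = ∑ x, ∑ z, ∑ y, f x y z from
    Finset.sum_congr rfl fun x _ => Finset.sum_comm, Finset.sum_comm]

lemma H_congr {X : Ω → α} {Y : Ω → β} (f : α → β) (g : β → α)
    (hfg : ∀ b, f (g b) = b) (hgf : ∀ a, g (f a) = a) (hXY : ∀ ω, Y ω = f (X ω)) :
    H w Y = H w X := by
  unfold H
  congr 1
  refine (Fintype.sum_equiv ⟨f, g, hgf, hfg⟩ _ _ fun a => ?_).symm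
  have : pr w Y (f a) = pr w X a := by
    refine pr_congr fun ω => ?_
    rw [hXY ω]
    constructor
    · intro h; have := congrArg g h; simpa [hgf] using this
    · intro h; rw [h]
  simp [Equiv.coe_fn_mk, this]

lemma pointwise_bound {p a b c : ℝ} (hp : 0 ≤ p) (hpa : p ≤ a) (hpb : p ≤ b) (hpc : p ≤ c)
    (ha : 0 ≤ a) (hb : 0 ≤ b) (hc : 0 ≤ c) :
    (p - a * b / c) / Real.log 2 ≤
      p * (Real.logb 2 p + Real.logb 2 c - Real.logb 2 a - Real.logb 2 b) := by
  have hlog2 : 0 < Real.log 2 := Real.log_pos (by norm_num)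
  rcases eq_or_lt_of_le hp with h0 | hp0
  · rw [← h0]
    simp only [zero_mul, zero_sub]
    apply div_nonpos_of_nonpos_of_nonneg _ hlog2.le
    simp only [neg_nonpos]
    positivity
  · have ha0 : 0 < a := lt_of_lt_of_le hp0 hpa
    have hb0 : 0 < b := lt_of_lt_of_le hp0 hpb
    have hc0 : 0 < c := lt_of_lt_of_le hp0 hpc
    have hbr : Real.logb 2 p + Real.logb 2 c - Real.logb 2 a - Real.logb 2 b
        = Real.logb 2 (p * c / (a * b)) := by
      rw [Real.logb_div (by positivity) (by positivity), Real.logb_mul hp0.ne' hc0.ne',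
        Real.logb_mul ha0.ne' hb0.ne']
      ring
    rw [hbr, Real.logb, mul_div_assoc']
    have hineq := Real.log_le_sub_one_of_pos (show 0 < (a*b)/(p*c) by positivity)
    have hswap : Real.log (p*c/(a*b)) = -Real.log ((a*b)/(p*c)) := by
      rw [← Real.log_inv]
      congr 1
      field_simp
    have h2 : p * ((a*b)/(p*c)) = a*b/c := by
      field_simp
    have key : p - a*b/c ≤ p * Real.log (p*c/(a*b)) := by
      rw [hswap]
      have h3 := mul_le_mul_of_nonneg_left hineq hp0.le
      rw [mul_sub, h2, mul_one] at h3
      linarith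
    gcongr

lemma cMI_eq (X : Ω → α) (Y : Ω → β) (Z : Ω → γ) :
    cMI w X Y Z = ∑ x, ∑ y, ∑ z,
      pr w (fun ω => (X ω, Y ω, Z ω)) (x, y, z) *
        (Real.logb 2 (pr w (fun ω => (X ω, Y ω, Z ω)) (x, y, z))
          + Real.logb 2 (pr w Z z)
          - Real.logb 2 (pr w (fun ω => (X ω, Z ω)) (x, z))
          - Real.logb 2 (pr w (fun ω => (Y ω, Z ω)) (y, z))) := by
  classical
  have S0 : (∑ x, ∑ y, ∑ z,
      pr w (fun ω => (X ω, Y ω, Z ω)) (x, y, z) *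
        (Real.logb 2 (pr w (fun ω => (X ω, Y ω, Z ω)) (x, y, z))
          + Real.logb 2 (pr w Z z)
          - Real.logb 2 (pr w (fun ω => (X ω, Z ω)) (x, z))
          - Real.logb 2 (pr w (fun ω => (Y ω, Z ω)) (y, z))))
      = (∑ x, ∑ y, ∑ z, pr w (fun ω => (X ω, Y ω, Z ω)) (x, y, z) *
            Real.logb 2 (pr w (fun ω => (X ω, Y ω, Z ω)) (x, y, z)))
        + (∑ x, ∑ y, ∑ z, pr w (fun ω => (X ω, Y ω, Z ω)) (x, y, z) *
            Real.logb 2 (pr w Z z))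
        - (∑ x, ∑ y, ∑ z, pr w (fun ω => (X ω, Y ω, Z ω)) (x, y, z) *
            Real.logb 2 (pr w (fun ω => (X ω, Z ω)) (x, z)))
        - (∑ x, ∑ y, ∑ z, pr w (fun ω => (X ω, Y ω, Z ω)) (x, y, z) *
            Real.logb 2 (pr w (fun ω => (Y ω, Z ω)) (y, z))) := by
    simp only [← Finset.sum_add_distrib, ← Finset.sum_sub_distrib]
    exact Finset.sum_congr rfl fun x _ => Finset.sum_congr rfl fun y _ =>
      Finset.sum_congr rfl fun z _ => by ring
  have hA2 : (∑ x, ∑ z, pr w (fun ω => (X ω, Z ω)) (x, z) *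
        Real.logb 2 (pr w (fun ω => (X ω, Z ω)) (x, z)))
      = ∑ x, ∑ y, ∑ z, pr w (fun ω => (X ω, Y ω, Z ω)) (x, y, z) *
          Real.logb 2 (pr w (fun ω => (X ω, Z ω)) (x, z)) := by
    refine Finset.sum_congr rfl fun x _ => ?_
    rw [Finset.sum_comm]
    exact Finset.sum_congr rfl fun z _ => by rw [marg1 X Y Z, Finset.sum_mul]
  have hA3 : (∑ y, ∑ z, pr w (fun ω => (Y ω, Z ω)) (y, z) *
        Real.logb 2 (pr w (fun ω => (Y ω, Z ω)) (y, z)))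
      = ∑ x, ∑ y, ∑ z, pr w (fun ω => (X ω, Y ω, Z ω)) (x, y, z) *
          Real.logb 2 (pr w (fun ω => (Y ω, Z ω)) (y, z)) := by
    rw [← sum_comm3]
    refine Finset.sum_congr rfl fun y _ => Finset.sum_congr rfl fun z _ => ?_
    rw [marg2 X (fun ω => (Y ω, Z ω)), Finset.sum_mul]
  have hA1 : (∑ z, pr w Z z * Real.logb 2 (pr w Z z))
      = ∑ x, ∑ y, ∑ z, pr w (fun ω => (X ω, Y ω, Z ω)) (x, y, z) *
          Real.logb 2 (pr w Z z) := by
    rw [show (∑ x, ∑ y, ∑ z, pr w (fun ω => (X ω, Y ω, Z ω)) (x, y, z) *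
          Real.logb 2 (pr w Z z)) = ∑ z, ∑ x, ∑ y, pr w (fun ω => (X ω, Y ω, Z ω)) (x, y, z) *
          Real.logb 2 (pr w Z z) from sum_comm3]
    refine Finset.sum_congr rfl fun z _ => ?_
    rw [marg2 X Z z, Finset.sum_mul]
    refine Finset.sum_congr rfl fun x _ => ?_
    rw [marg1 X Y Z, Finset.sum_mul]
  rw [S0, ← hA1, ← hA2, ← hA3]
  unfold cMI condH H
  simp only [Fintype.sum_prod_type]
  ring

lemma pr_le_marg1 (hw : ∀ ω, 0 ≤ w ω) (X : Ω → α) (Y : Ω → β) (Z : Ω → γ) (x y z) :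
    pr w (fun ω => (X ω, Y ω, Z ω)) (x, y, z) ≤ pr w (fun ω => (X ω, Z ω)) (x, z) := by
  rw [marg1 X Y Z]
  exact Finset.single_le_sum (f := fun y' => pr w (fun ω => (X ω, Y ω, Z ω)) (x, y', z))
    (fun y' _ => pr_nonneg hw _ _) (Finset.mem_univ y)

lemma pr_le_marg2 (hw : ∀ ω, 0 ≤ w ω) (X : Ω → α) (Z : Ω → γ) (x z) :
    pr w (fun ω => (X ω, Z ω)) (x, z) ≤ pr w Z z := by
  rw [marg2 X Z]
  exact Finset.single_le_sum (f := fun x' => pr w (fun ω => (X ω, Z ω)) (x', z))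
    (fun x' _ => pr_nonneg hw _ _) (Finset.mem_univ x)

lemma pr_le_marg3 (hw : ∀ ω, 0 ≤ w ω) (X : Ω → α) (Y : Ω → β) (x y) :
    pr w (fun ω => (X ω, Y ω)) (x, y) ≤ pr w X x := by
  rw [marg3 X Y]
  exact Finset.single_le_sum (f := fun y' => pr w (fun ω => (X ω, Y ω)) (x, y'))
    (fun y' _ => pr_nonneg hw _ _) (Finset.mem_univ y)

lemma cMI_nonneg (hw : IsPMF w) (X : Ω → α) (Y : Ω → β) (Z : Ω → γ) :
    0 ≤ cMI w X Y Z := by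
  classical
  obtain ⟨hw0, hw1⟩ := hw
  rw [cMI_eq]
  have hlog2 : 0 < Real.log 2 := Real.log_pos (by norm_num)
  have hbound : ∀ x y z,
      (pr w (fun ω => (X ω, Y ω, Z ω)) (x, y, z)
        - pr w (fun ω => (X ω, Z ω)) (x, z) * pr w (fun ω => (Y ω, Z ω)) (y, z) / pr w Z z)
        / Real.log 2
      ≤ pr w (fun ω => (X ω, Y ω, Z ω)) (x, y, z) *
        (Real.logb 2 (pr w (fun ω => (X ω, Y ω, Z ω)) (x, y, z))
          + Real.logb 2 (pr w Z z)
          - Real.logb 2 (pr w (fun ω => (X ω, Z ω)) (x, z))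
          - Real.logb 2 (pr w (fun ω => (Y ω, Z ω)) (y, z))) := by
    intro x y z
    refine pointwise_bound (pr_nonneg hw0 _ _) (pr_le_marg1 hw0 X Y Z x y z)
      ?_ ?_ (pr_nonneg hw0 _ _) (pr_nonneg hw0 _ _) (pr_nonneg hw0 _ _)
    · calc pr w (fun ω => (X ω, Y ω, Z ω)) (x, y, z)
          = pr w (fun ω => (Y ω, X ω, Z ω)) (y, x, z) := pr_congr (by simp [Prod.ext_iff]; tauto)
        _ ≤ pr w (fun ω => (Y ω, Z ω)) (y, z) := pr_le_marg1 hw0 Y X Z y x z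
    · calc pr w (fun ω => (X ω, Y ω, Z ω)) (x, y, z)
          ≤ pr w (fun ω => (X ω, Z ω)) (x, z) := pr_le_marg1 hw0 X Y Z x y z
        _ ≤ pr w Z z := pr_le_marg2 hw0 X Z x z
  have hsum : 0 ≤ ∑ x, ∑ y, ∑ z,
      (pr w (fun ω => (X ω, Y ω, Z ω)) (x, y, z)
        - pr w (fun ω => (X ω, Z ω)) (x, z) * pr w (fun ω => (Y ω, Z ω)) (y, z) / pr w Z z)
        / Real.log 2 := by
    simp only [div_eq_mul_inv, ← Finset.sum_mul]
    refine mul_nonneg ?_ (by positivity)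
    simp only [Finset.sum_sub_distrib]
    have hPtot : (∑ x, ∑ y, ∑ z, pr w (fun ω => (X ω, Y ω, Z ω)) (x, y, z)) = 1 := by
      rw [← hw1, ← pr_total (fun ω => (X ω, Y ω, Z ω))]
      simp [Fintype.sum_prod_type]
    have hq : (∑ x, ∑ y, ∑ z, pr w (fun ω => (X ω, Z ω)) (x, z) *
          pr w (fun ω => (Y ω, Z ω)) (y, z) * (pr w Z z)⁻¹) ≤ 1 := by
      rw [sum_comm3]
      calc (∑ z, ∑ x, ∑ y, pr w (fun ω => (X ω, Z ω)) (x, z) *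
            pr w (fun ω => (Y ω, Z ω)) (y, z) * (pr w Z z)⁻¹)
          = ∑ z, pr w Z z * pr w Z z * (pr w Z z)⁻¹ := by
            refine Finset.sum_congr rfl fun z _ => ?_
            have e : (∑ x, ∑ y, pr w (fun ω => (X ω, Z ω)) (x, z) *
                pr w (fun ω => (Y ω, Z ω)) (y, z) * (pr w Z z)⁻¹)
                = (∑ x, pr w (fun ω => (X ω, Z ω)) (x, z)) *
                  (∑ y, pr w (fun ω => (Y ω, Z ω)) (y, z)) * (pr w Z z)⁻¹ := by
              simp only [Finset.sum_mul, Finset.mul_sum]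
              exact Finset.sum_comm
            rw [e, ← marg2 X Z z, ← marg2 Y Z z]
        _ ≤ ∑ z, pr w Z z * 1 := by
            refine Finset.sum_le_sum fun z _ => ?_
            rw [mul_assoc]
            refine mul_le_mul_of_nonneg_left ?_ (pr_nonneg hw0 _ _)
            rcases eq_or_ne (pr w Z z) 0 with h | h
            · simp [h]
            · rw [mul_inv_cancel₀ h]
        _ = 1 := by
            simp only [mul_one]
            rw [← hw1, ← pr_total Z]
    -- goal : 0 ≤ ΣΣΣ P − ΣΣΣ q  (with mul_inv form)
    rw [hPtot] at *
    linarith [hq]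
  calc (0:ℝ) ≤ _ := hsum
    _ ≤ _ := by
        refine Finset.sum_le_sum fun x _ => Finset.sum_le_sum fun y _ =>
          Finset.sum_le_sum fun z _ => hbound x y z

lemma cMI_eq_zero (hw : IsPMF w) {X : Ω → α} {Y : Ω → β} {Z : Ω → γ}
    (h : CondIndep w X Y Z) : cMI w X Y Z = 0 := by
  classical
  obtain ⟨hw0, hw1⟩ := hw
  rw [cMI_eq]
  refine Finset.sum_eq_zero fun x _ => Finset.sum_eq_zero fun y _ =>
    Finset.sum_eq_zero fun z _ => ?_
  rcases eq_or_lt_of_le (pr_nonneg hw0 (fun ω => (X ω, Y ω, Z ω)) (x, y, z)) with h0 | hp0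
  · rw [← h0, zero_mul]
  · have hxz : 0 < pr w (fun ω => (X ω, Z ω)) (x, z) :=
      lt_of_lt_of_le hp0 (pr_le_marg1 hw0 X Y Z x y z)
    have hyz : 0 < pr w (fun ω => (Y ω, Z ω)) (y, z) := by
      refine lt_of_lt_of_le hp0 ?_
      calc pr w (fun ω => (X ω, Y ω, Z ω)) (x, y, z)
          = pr w (fun ω => (Y ω, X ω, Z ω)) (y, x, z) := pr_congr (by simp [Prod.ext_iff]; tauto)
        _ ≤ pr w (fun ω => (Y ω, Z ω)) (y, z) := pr_le_marg1 hw0 Y X Z y x z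
    have hz : 0 < pr w Z z := lt_of_lt_of_le hxz (pr_le_marg2 hw0 X Z x z)
    have hci := h x y z
    have : Real.logb 2 (pr w (fun ω => (X ω, Y ω, Z ω)) (x, y, z)) + Real.logb 2 (pr w Z z)
        - Real.logb 2 (pr w (fun ω => (X ω, Z ω)) (x, z))
        - Real.logb 2 (pr w (fun ω => (Y ω, Z ω)) (y, z)) = 0 := by
      have e1 : Real.logb 2 (pr w (fun ω => (X ω, Y ω, Z ω)) (x, y, z)) +
          Real.logb 2 (pr w Z z) =
          Real.logb 2 (pr w (fun ω => (X ω, Y ω, Z ω)) (x, y, z) * pr w Z z) :=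
        (Real.logb_mul hp0.ne' hz.ne').symm
      have e2 : Real.logb 2 (pr w (fun ω => (X ω, Z ω)) (x, z)) +
          Real.logb 2 (pr w (fun ω => (Y ω, Z ω)) (y, z)) =
          Real.logb 2 (pr w (fun ω => (X ω, Z ω)) (x, z) *
            pr w (fun ω => (Y ω, Z ω)) (y, z)) :=
        (Real.logb_mul hxz.ne' hyz.ne').symm
      rw [sub_sub, e1, e2, hci, sub_self]
    rw [this, mul_zero]

end Helpers
section Main
set_option linter.unusedSectionVars false
set_option maxHeartbeats 1000000
variable {Ω α β γ κ : Type} [Fintype Ω] [Fintype α] [Fintype β] [Fintype γ] [Fintype κ]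
variable {w : Ω → ℝ} {A : Ω → α} {B : Ω → β} {E : Ω → γ} {U : Ω → κ}

-- hU in canonical form
lemma hU' (hU : CondIndep w U (fun ω => (B ω, E ω)) A) (u b e a) :
    pr w (fun ω => (A ω, B ω, E ω, U ω)) (a, b, e, u) * pr w A a
      = pr w (fun ω => (A ω, U ω)) (a, u) * pr w (fun ω => (A ω, B ω, E ω)) (a, b, e) := by
  have h := hU u (b, e) a
  have c1 : pr w (fun ω => (U ω, (B ω, E ω), A ω)) (u, (b, e), a)
      = pr w (fun ω => (A ω, B ω, E ω, U ω)) (a, b, e, u) :=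
    pr_congr fun ω => by simp only [Prod.mk.injEq]; tauto
  have c2 : pr w (fun ω => (U ω, A ω)) (u, a) = pr w (fun ω => (A ω, U ω)) (a, u) :=
    pr_congr fun ω => by simp only [Prod.mk.injEq]; tauto
  have c3 : pr w (fun ω => ((B ω, E ω), A ω)) ((b, e), a)
      = pr w (fun ω => (A ω, B ω, E ω)) (a, b, e) :=
    pr_congr fun ω => by simp only [Prod.mk.injEq]; tauto
  rw [c1, c2, c3] at h
  exact h

-- hdeg in canonical form
lemma hdeg' (hdeg : CondIndep w A E B) (a b e) :
    pr w (fun ω => (A ω, B ω, E ω)) (a, b, e) * pr w B b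
      = pr w (fun ω => (A ω, B ω)) (a, b) * pr w (fun ω => (B ω, E ω)) (b, e) := by
  have h := hdeg a e b
  have c1 : pr w (fun ω => (A ω, E ω, B ω)) (a, e, b)
      = pr w (fun ω => (A ω, B ω, E ω)) (a, b, e) :=
    pr_congr fun ω => by simp only [Prod.mk.injEq]; tauto
  have c2 : pr w (fun ω => (A ω, B ω)) (a, b) = pr w (fun ω => (A ω, B ω)) (a, b) := rfl
  have c3 : pr w (fun ω => (E ω, B ω)) (e, b) = pr w (fun ω => (B ω, E ω)) (b, e) :=
    pr_congr fun ω => by simp only [Prod.mk.injEq]; tauto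
  rw [c1, c3] at h
  exact h

-- E1 : pointwise factorization of the joint
lemma fact1 (hw0 : ∀ ω, 0 ≤ w ω) (hU : CondIndep w U (fun ω => (B ω, E ω)) A) (a b e u) :
    pr w (fun ω => (A ω, B ω, E ω, U ω)) (a, b, e, u)
      = pr w (fun ω => (A ω, B ω, E ω)) (a, b, e) * pr w (fun ω => (A ω, U ω)) (a, u)
          / pr w A a := by
  rcases eq_or_ne (pr w A a) 0 with h0 | h0
  · rw [h0, div_zero]
    have hb1 : pr w (fun ω => (A ω, B ω, E ω, U ω)) (a, b, e, u)
        ≤ pr w (fun ω => (A ω, B ω, E ω)) (a, b, e) := by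
      rw [marg5 A B E U a b e]
      exact Finset.single_le_sum
        (f := fun v => pr w (fun ω => (A ω, B ω, E ω, U ω)) (a, b, e, v))
        (fun v _ => pr_nonneg hw0 _ _) (Finset.mem_univ u)
    have hb2 : pr w (fun ω => (A ω, B ω, E ω)) (a, b, e)
        ≤ pr w (fun ω => (A ω, B ω)) (a, b) := by
      rw [marg6 A B E a b]
      exact Finset.single_le_sum
        (f := fun e' => pr w (fun ω => (A ω, B ω, E ω)) (a, b, e'))
        (fun e' _ => pr_nonneg hw0 _ _) (Finset.mem_univ e)
    have hb3 := pr_le_marg3 hw0 A B a b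
    have := pr_nonneg hw0 (fun ω => (A ω, B ω, E ω, U ω)) (a, b, e, u)
    linarith
  · rw [eq_div_iff h0]
    rw [hU' hU u b e a]
    ring

-- E2 : pointwise factorization of the ABE marginal
lemma fact2 (hw0 : ∀ ω, 0 ≤ w ω) (hdeg : CondIndep w A E B) (a b e) :
    pr w (fun ω => (A ω, B ω, E ω)) (a, b, e)
      = pr w (fun ω => (A ω, B ω)) (a, b) * pr w (fun ω => (B ω, E ω)) (b, e)
          / pr w B b := by
  rcases eq_or_ne (pr w B b) 0 with h0 | h0
  · rw [h0, div_zero]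
    have hb1 : pr w (fun ω => (A ω, B ω, E ω)) (a, b, e)
        ≤ pr w (fun ω => (B ω, E ω)) (b, e) := by
      rw [marg2 (w := w) A (fun ω => (B ω, E ω)) (b, e)]
      exact Finset.single_le_sum
        (f := fun a' => pr w (fun ω => (A ω, B ω, E ω)) (a', b, e))
        (fun a' _ => pr_nonneg hw0 _ _) (Finset.mem_univ a)
    have hb2 := pr_le_marg3 hw0 B E b e
    have := pr_nonneg hw0 (fun ω => (A ω, B ω, E ω)) (a, b, e)
    linarith
  · rw [eq_div_iff h0]
    rw [hdeg' hdeg a b e]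

-- E3 : ABU marginal factorization
lemma fact3 (hw0 : ∀ ω, 0 ≤ w ω) (hU : CondIndep w U (fun ω => (B ω, E ω)) A) (a b u) :
    pr w (fun ω => (A ω, B ω, U ω)) (a, b, u)
      = pr w (fun ω => (A ω, B ω)) (a, b) * pr w (fun ω => (A ω, U ω)) (a, u)
          / pr w A a := by
  rw [marg4 A B E U a b u]
  calc (∑ e, pr w (fun ω => (A ω, B ω, E ω, U ω)) (a, b, e, u))
      = ∑ e, pr w (fun ω => (A ω, B ω, E ω)) (a, b, e) *
          (pr w (fun ω => (A ω, U ω)) (a, u) / pr w A a) := by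
        refine Finset.sum_congr rfl fun e _ => ?_
        rw [fact1 hw0 hU a b e u]
        ring
    _ = pr w (fun ω => (A ω, B ω)) (a, b) * pr w (fun ω => (A ω, U ω)) (a, u) / pr w A a := by
        rw [← Finset.sum_mul, ← marg6 A B E a b]
        ring

-- E4 : AEU marginal factorization (sum of fact1 over b)
lemma fact4 (hw0 : ∀ ω, 0 ≤ w ω) (hU : CondIndep w U (fun ω => (B ω, E ω)) A) (a e u) :
    pr w (fun ω => (A ω, E ω, U ω)) (a, e, u)
      = pr w (fun ω => (A ω, E ω)) (a, e) * pr w (fun ω => (A ω, U ω)) (a, u)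
          / pr w A a := by
  have hm : pr w (fun ω => (A ω, E ω, U ω)) (a, e, u)
      = ∑ b, pr w (fun ω => (A ω, B ω, E ω, U ω)) (a, b, e, u) :=
    marg1 A B (fun ω => (E ω, U ω)) a (e, u)
  rw [hm]
  calc (∑ b, pr w (fun ω => (A ω, B ω, E ω, U ω)) (a, b, e, u))
      = ∑ b, pr w (fun ω => (A ω, B ω, E ω)) (a, b, e) *
          (pr w (fun ω => (A ω, U ω)) (a, u) / pr w A a) := by
        refine Finset.sum_congr rfl fun b _ => ?_
        rw [fact1 hw0 hU a b e u]
        ring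
    _ = pr w (fun ω => (A ω, E ω)) (a, e) * pr w (fun ω => (A ω, U ω)) (a, u) / pr w A a := by
        rw [← Finset.sum_mul]
        rw [show pr w (fun ω => (A ω, E ω)) (a, e)
          = ∑ b, pr w (fun ω => (A ω, B ω, E ω)) (a, b, e) from marg1 A B E a e]
        ring

-- CI2 : U ⫫ B | A
lemma CI2 (hw0 : ∀ ω, 0 ≤ w ω) (hU : CondIndep w U (fun ω => (B ω, E ω)) A) :
    CondIndep w U B A := by
  intro u b a
  have c1 : pr w (fun ω => (U ω, B ω, A ω)) (u, b, a)
      = pr w (fun ω => (A ω, B ω, U ω)) (a, b, u) :=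
    pr_congr fun ω => by simp only [Prod.mk.injEq]; tauto
  have c2 : pr w (fun ω => (U ω, A ω)) (u, a) = pr w (fun ω => (A ω, U ω)) (a, u) :=
    pr_congr fun ω => by simp only [Prod.mk.injEq]; tauto
  have c3 : pr w (fun ω => (B ω, A ω)) (b, a) = pr w (fun ω => (A ω, B ω)) (a, b) :=
    pr_congr fun ω => by simp only [Prod.mk.injEq]; tauto
  rw [c1, c2, c3]
  -- qabu * qa = qau * qab : sum hU' over e
  have h : (∑ e, pr w (fun ω => (A ω, B ω, E ω, U ω)) (a, b, e, u)) * pr w A a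
      = pr w (fun ω => (A ω, U ω)) (a, u) * ∑ e, pr w (fun ω => (A ω, B ω, E ω)) (a, b, e) := by
    rw [Finset.sum_mul, Finset.mul_sum]
    exact Finset.sum_congr rfl fun e _ => hU' hU u b e a
  rw [← marg4 A B E U a b u, ← marg6 A B E a b] at h
  exact h

-- CI3 : U ⫫ E | A
lemma CI3 (hw0 : ∀ ω, 0 ≤ w ω) (hU : CondIndep w U (fun ω => (B ω, E ω)) A) :
    CondIndep w U E A := by
  intro u e a
  have c1 : pr w (fun ω => (U ω, E ω, A ω)) (u, e, a)
      = pr w (fun ω => (A ω, E ω, U ω)) (a, e, u) :=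
    pr_congr fun ω => by simp only [Prod.mk.injEq]; tauto
  have c2 : pr w (fun ω => (U ω, A ω)) (u, a) = pr w (fun ω => (A ω, U ω)) (a, u) :=
    pr_congr fun ω => by simp only [Prod.mk.injEq]; tauto
  have c3 : pr w (fun ω => (E ω, A ω)) (e, a) = pr w (fun ω => (A ω, E ω)) (a, e) :=
    pr_congr fun ω => by simp only [Prod.mk.injEq]; tauto
  rw [c1, c2, c3]
  rw [fact4 hw0 hU a e u]
  rcases eq_or_ne (pr w A a) 0 with h0 | h0
  · have hau : pr w (fun ω => (A ω, U ω)) (a, u) = 0 :=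
      le_antisymm (h0 ▸ pr_le_marg3 hw0 A U a u) (pr_nonneg hw0 _ _)
    rw [hau, h0]
    simp
  · rw [div_mul_cancel₀ _ h0, mul_comm]

-- CI4 : U ⫫ E | B
lemma CI4 (hw0 : ∀ ω, 0 ≤ w ω) (hdeg : CondIndep w A E B)
    (hU : CondIndep w U (fun ω => (B ω, E ω)) A) : CondIndep w U E B := by
  intro u e b
  have c1 : pr w (fun ω => (U ω, E ω, B ω)) (u, e, b)
      = pr w (fun ω => (B ω, E ω, U ω)) (b, e, u) :=
    pr_congr fun ω => by simp only [Prod.mk.injEq]; tauto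
  have c2 : pr w (fun ω => (U ω, B ω)) (u, b) = pr w (fun ω => (B ω, U ω)) (b, u) :=
    pr_congr fun ω => by simp only [Prod.mk.injEq]; tauto
  have c3 : pr w (fun ω => (E ω, B ω)) (e, b) = pr w (fun ω => (B ω, E ω)) (b, e) :=
    pr_congr fun ω => by simp only [Prod.mk.injEq]; tauto
  rw [c1, c2, c3]
  -- qbeu = (qbe/qb) * S  and qbu = S  where S = Σ_a qab*qau/qa
  have hbeu : pr w (fun ω => (B ω, E ω, U ω)) (b, e, u)
      = pr w (fun ω => (B ω, E ω)) (b, e) / pr w B b *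
          ∑ a, pr w (fun ω => (A ω, B ω)) (a, b) * pr w (fun ω => (A ω, U ω)) (a, u)
            / pr w A a := by
    have hm : pr w (fun ω => (B ω, E ω, U ω)) (b, e, u)
        = ∑ a, pr w (fun ω => (A ω, B ω, E ω, U ω)) (a, b, e, u) :=
      marg2 A (fun ω => (B ω, E ω, U ω)) (b, e, u)
    rw [hm, Finset.mul_sum]
    refine Finset.sum_congr rfl fun a _ => ?_
    rw [fact1 hw0 hU a b e u, fact2 hw0 hdeg a b e]
    ring
  have hbu : pr w (fun ω => (B ω, U ω)) (b, u)
      = ∑ a, pr w (fun ω => (A ω, B ω)) (a, b) * pr w (fun ω => (A ω, U ω)) (a, u)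
          / pr w A a := by
    have hm : pr w (fun ω => (B ω, U ω)) (b, u)
        = ∑ a, pr w (fun ω => (A ω, B ω, U ω)) (a, b, u) :=
      marg2 A (fun ω => (B ω, U ω)) (b, u)
    rw [hm]
    exact Finset.sum_congr rfl fun a _ => fact3 hw0 hU a b u
  rcases eq_or_ne (pr w B b) 0 with h0 | h0
  · have hqbu : pr w (fun ω => (B ω, U ω)) (b, u) = 0 :=
      le_antisymm (h0 ▸ pr_le_marg3 hw0 B U b u) (pr_nonneg hw0 _ _)
    have hqbeu : pr w (fun ω => (B ω, E ω, U ω)) (b, e, u) = 0 :=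
      le_antisymm (h0 ▸ pr_le_marg3 hw0 B (fun ω => (E ω, U ω)) b (e, u))
        (pr_nonneg hw0 _ _)
    rw [hqbeu, hqbu, h0]
    ring
  · rw [hbeu, hbu]
    field_simp

-- CI1 : A ⫫ E | (B,U)
lemma CI1 (hw0 : ∀ ω, 0 ≤ w ω) (hdeg : CondIndep w A E B)
    (hU : CondIndep w U (fun ω => (B ω, E ω)) A) :
    CondIndep w A E (fun ω => (B ω, U ω)) := by
  intro a e p
  obtain ⟨b, u⟩ := p
  have c1 : pr w (fun ω => (A ω, E ω, (B ω, U ω))) (a, e, (b, u))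
      = pr w (fun ω => (A ω, B ω, E ω, U ω)) (a, b, e, u) :=
    pr_congr fun ω => by simp only [Prod.mk.injEq]; tauto
  have c2 : pr w (fun ω => (E ω, (B ω, U ω))) (e, (b, u))
      = pr w (fun ω => (B ω, E ω, U ω)) (b, e, u) :=
    pr_congr fun ω => by simp only [Prod.mk.injEq]; tauto
  rw [c1, c2]
  -- Q * qbu = qabu * qbeu
  have hbeu : pr w (fun ω => (B ω, E ω, U ω)) (b, e, u)
      = pr w (fun ω => (B ω, E ω)) (b, e) / pr w B b *
          ∑ a', pr w (fun ω => (A ω, B ω)) (a', b) * pr w (fun ω => (A ω, U ω)) (a', u)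
            / pr w A a' := by
    have hm : pr w (fun ω => (B ω, E ω, U ω)) (b, e, u)
        = ∑ a', pr w (fun ω => (A ω, B ω, E ω, U ω)) (a', b, e, u) :=
      marg2 A (fun ω => (B ω, E ω, U ω)) (b, e, u)
    rw [hm, Finset.mul_sum]
    refine Finset.sum_congr rfl fun a' _ => ?_
    rw [fact1 hw0 hU a' b e u, fact2 hw0 hdeg a' b e]
    ring
  have hbu : pr w (fun ω => (B ω, U ω)) (b, u)
      = ∑ a', pr w (fun ω => (A ω, B ω)) (a', b) * pr w (fun ω => (A ω, U ω)) (a', u)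
          / pr w A a' := by
    have hm : pr w (fun ω => (B ω, U ω)) (b, u)
        = ∑ a', pr w (fun ω => (A ω, B ω, U ω)) (a', b, u) :=
      marg2 A (fun ω => (B ω, U ω)) (b, u)
    rw [hm]
    exact Finset.sum_congr rfl fun a' _ => fact3 hw0 hU a' b u
  rw [hbeu, hbu, fact1 hw0 hU a b e u, fact2 hw0 hdeg a b e, fact3 hw0 hU a b u]
  ring

end Main
section Identities
set_option linter.unusedSectionVars false
variable {Ω : Type} [Fintype Ω] {w : Ω → ℝ}
variable {α β γ δ : Type} [Fintype α] [Fintype β] [Fintype γ] [Fintype δ]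

lemma Hswap (X : Ω → α) (Y : Ω → β) :
    H w (fun ω => (Y ω, X ω)) = H w (fun ω => (X ω, Y ω)) :=
  H_congr (fun p => (p.2, p.1)) (fun p => (p.2, p.1)) (fun _ => rfl) (fun _ => rfl)
    (fun _ => rfl)

lemma Hswap13 (X : Ω → α) (Y : Ω → β) (Z : Ω → γ) :
    H w (fun ω => (Z ω, Y ω, X ω)) = H w (fun ω => (X ω, Y ω, Z ω)) :=
  H_congr (fun p => (p.2.2, p.2.1, p.1)) (fun p => (p.2.2, p.2.1, p.1)) (fun _ => rfl)
    (fun _ => rfl) (fun _ => rfl)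

lemma Hswap23 (X : Ω → α) (Y : Ω → β) (Z : Ω → γ) :
    H w (fun ω => (X ω, Z ω, Y ω)) = H w (fun ω => (X ω, Y ω, Z ω)) :=
  H_congr (fun p => (p.1, p.2.2, p.2.1)) (fun p => (p.1, p.2.2, p.2.1)) (fun _ => rfl)
    (fun _ => rfl) (fun _ => rfl)

lemma Hswap12of3 (X : Ω → α) (Y : Ω → β) (Z : Ω → γ) :
    H w (fun ω => (Y ω, X ω, Z ω)) = H w (fun ω => (X ω, Y ω, Z ω)) :=
  H_congr (fun p => (p.2.1, p.1, p.2.2)) (fun p => (p.2.1, p.1, p.2.2)) (fun _ => rfl)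
    (fun _ => rfl) (fun _ => rfl)

lemma Hswap23of4 (X : Ω → α) (Y : Ω → β) (Z : Ω → γ) (V : Ω → δ) :
    H w (fun ω => (X ω, Z ω, Y ω, V ω)) = H w (fun ω => (X ω, Y ω, Z ω, V ω)) :=
  H_congr (fun p => (p.1, p.2.2.1, p.2.1, p.2.2.2)) (fun p => (p.1, p.2.2.1, p.2.1, p.2.2.2))
    (fun _ => rfl) (fun _ => rfl) (fun _ => rfl)

variable {κ : Type} [Fintype κ] {A : Ω → α} {B : Ω → β} {E : Ω → γ} {U : Ω → κ}

lemma ID1 : cMI w A B U - cMI w A E U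
    = cMI w A B (fun ω => (E ω, U ω)) - cMI w A E (fun ω => (B ω, U ω)) := by
  unfold cMI condH
  rw [Hswap23of4 A B E U, Hswap12of3 B E U]
  ring

lemma ID2 : MI w A B - MI w A E = cMI w A B E - cMI w A E B := by
  unfold cMI condH MI
  rw [Hswap23 A B E, Hswap B E]
  ring

lemma ID3 : MI w A B - MI w A E - (cMI w A B U - cMI w A E U)
    = cMI w U B E - cMI w U E B - cMI w U B A + cMI w U E A := by
  unfold cMI condH MI
  rw [Hswap23 U B E, Hswap B E, Hswap E U, Hswap B U, Hswap13 A B U, Hswap B A,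
    Hswap13 A E U, Hswap E A]
  ring

end Identities

theorem stmt5 {Ω α β γ : Type} [Fintype Ω] [Fintype α] [Fintype β] [Fintype γ]
    (w : Ω → ℝ) (hw : IsPMF w) (A : Ω → α) (B : Ω → β) (E : Ω → γ)
    (hdeg : CondIndep w A E B) :
    (∀ (κ : Type) [Fintype κ] (U : Ω → κ), CondIndep w U (fun ω => (B ω, E ω)) A →
      0 ≤ cMI w A B U - cMI w A E U) ∧
    0 ≤ MI w A B - MI w A E ∧
    (∀ (κ : Type) [Fintype κ] (U : Ω → κ), CondIndep w U (fun ω => (B ω, E ω)) A →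
      cMI w A B U - cMI w A E U ≤ MI w A B - MI w A E) := by
  refine ⟨?_, ?_, ?_⟩
  · intro κ _ U hU
    have h1 : cMI w A E (fun ω => (B ω, U ω)) = 0 := cMI_eq_zero hw (CI1 hw.1 hdeg hU)
    have h2 : 0 ≤ cMI w A B (fun ω => (E ω, U ω)) := cMI_nonneg hw A B _
    have hid := ID1 (w := w) (A := A) (B := B) (E := E) (U := U)
    linarith
  · have h1 : cMI w A E B = 0 := cMI_eq_zero hw hdeg
    have h2 : 0 ≤ cMI w A B E := cMI_nonneg hw A B E
    have hid := ID2 (w := w) (A := A) (B := B) (E := E)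
    linarith
  · intro κ _ U hU
    have h1 : cMI w U E B = 0 := cMI_eq_zero hw (CI4 hw.1 hdeg hU)
    have h2 : cMI w U B A = 0 := cMI_eq_zero hw (CI2 hw.1 hU)
    have h3 : cMI w U E A = 0 := cMI_eq_zero hw (CI3 hw.1 hU)
    have h4 : 0 ≤ cMI w U B E := cMI_nonneg hw U B E
    have hid := ID3 (w := w) (A := A) (B := B) (E := E) (U := U)
    linarith
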